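/- A generalized principal lattice of degree n is a GC_n set: for each node x_{i₀j₀k₀} (i₀+j₀+k₀ = n), the product of the lines ℓ_i^0 (i < i₀), ℓ_j^1 (j < j₀), ℓ_k^2 (k < k₀), suitably normalized, is its fundamental polynomial. -/

import Mathlib

attribute [local instance] Classical.propDecidable

/-- Evaluate a bivariate polynomial at a point of the plane. -/
noncomputable def evalPt (p : MvPolynomial (Fin 2) ℝ) (A : ℝ × ℝ) : ℝ :=
  MvPolynomial.eval ![A.1, A.2] p

/-- A (polynomial defining a) line: a bivariate polynomial of total degree exactly 1. -/
def IsLinearPoly (l : MvPolynomial (Fin 2) ℝ) : Prop := l.totalDegree = 1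

/-- A point lies on the line defined by `l`. -/
def OnLine (l : MvPolynomial (Fin 2) ℝ) (A : ℝ × ℝ) : Prop := evalPt l A = 0

/-- Two degree-1 polynomials define the same line (same zero set). -/
def SameLine (l₁ l₂ : MvPolynomial (Fin 2) ℝ) : Prop := ∀ P, OnLine l₁ P ↔ OnLine l₂ P

/-- `X` is an `n`-correct set of nodes in the plane. -/
def NCorrect (n : ℕ) (X : Finset (ℝ × ℝ)) : Prop :=
  X.card = (n + 2) * (n + 1) / 2 ∧
  ∀ c : (ℝ × ℝ) → ℝ, ∃! p : MvPolynomial (Fin 2) ℝ,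
    p.totalDegree ≤ n ∧ ∀ A ∈ X, evalPt p A = c A

/-- `p` is the `n`-fundamental polynomial of node `A` in `X`. -/
def IsFundamental (n : ℕ) (X : Finset (ℝ × ℝ)) (A : ℝ × ℝ)
    (p : MvPolynomial (Fin 2) ℝ) : Prop :=
  p.totalDegree ≤ n ∧ evalPt p A = 1 ∧ ∀ B ∈ X, B ≠ A → evalPt p B = 0

/-- Node `A` of `X` uses line `l`. -/
def Uses (n : ℕ) (X : Finset (ℝ × ℝ)) (A : ℝ × ℝ) (l : MvPolynomial (Fin 2) ℝ) : Prop :=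
  ∃ p, IsFundamental n X A p ∧ l ∣ p

/-- The set of nodes of `X` using the line `l` (the set `Xˡ`). -/
noncomputable def UsedSet (n : ℕ) (X : Finset (ℝ × ℝ)) (l : MvPolynomial (Fin 2) ℝ) :
    Finset (ℝ × ℝ) := X.filter (fun A => Uses n X A l)

/-- `l` is a maximal line of `X`: a line passing through exactly `n+1` nodes. -/
def IsMaximalLine (n : ℕ) (X : Finset (ℝ × ℝ)) (l : MvPolynomial (Fin 2) ℝ) : Prop :=
  IsLinearPoly l ∧ (X.filter (fun A => OnLine l A)).card = n + 1

/-- `X` is a `GC_n` set. -/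
def GCSet (n : ℕ) (X : Finset (ℝ × ℝ)) : Prop :=
  NCorrect n X ∧
  ∀ A ∈ X, ∃ f : Fin n → MvPolynomial (Fin 2) ℝ,
    (∀ i, IsLinearPoly (f i)) ∧ IsFundamental n X A (∏ i, f i)

/-- `L` is a set of representatives (one per line) of all maximal lines of `X`. -/
def MaximalLinesRep (n : ℕ) (X : Finset (ℝ × ℝ))
    (L : Finset (MvPolynomial (Fin 2) ℝ)) : Prop :=
  (∀ l ∈ L, IsMaximalLine n X l) ∧
  (∀ l₁ ∈ L, ∀ l₂ ∈ L, SameLine l₁ l₂ → l₁ = l₂) ∧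
  (∀ l, IsMaximalLine n X l → ∃ l' ∈ L, SameLine l l')

/-- A maximal line `lam` is `l`-disjoint: it meets `l` at no node of `X`. -/
def IsDisjointMax (n : ℕ) (X : Finset (ℝ × ℝ)) (l lam : MvPolynomial (Fin 2) ℝ) : Prop :=
  IsMaximalLine n X lam ∧ ∀ A ∈ X, ¬(OnLine lam A ∧ OnLine l A)

/-- A maximal line `lam` is a member of a pair of `l`-adjoint maximal lines. -/
def IsAdjointMax (n : ℕ) (X : Finset (ℝ × ℝ)) (l lam : MvPolynomial (Fin 2) ℝ) : Prop :=
  IsMaximalLine n X lam ∧ ∃ lam', IsMaximalLine n X lam' ∧ ¬SameLine lam lam' ∧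
    ∃ A ∈ X, OnLine lam A ∧ OnLine lam' A ∧ OnLine l A

/-- The `l`-lowering `X̂(l)` of `X`. -/
noncomputable def Lowering (n : ℕ) (X : Finset (ℝ × ℝ)) (l : MvPolynomial (Fin 2) ℝ) :
    Finset (ℝ × ℝ) :=
  X.filter (fun A => ¬ ∃ lam, (IsDisjointMax n X l lam ∨ IsAdjointMax n X l lam) ∧ OnLine lam A)

/-- A node `A` is a `1_m`-node of `X` w.r.t. the maximal-line representatives `L`:
it lies on exactly one maximal line. -/
def Is1mNode (L : Finset (MvPolynomial (Fin 2) ℝ)) (A : ℝ × ℝ) : Prop :=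
  (L.filter (fun l => OnLine l A)).card = 1

/-- `k` lines in general position: no two parallel (any two meet in exactly one point),
no three concurrent. -/
def InGenPos (k : ℕ) (f : Fin k → MvPolynomial (Fin 2) ℝ) : Prop :=
  (∀ i, IsLinearPoly (f i)) ∧
  (∀ i j, i ≠ j → ∃! P : ℝ × ℝ, OnLine (f i) P ∧ OnLine (f j) P) ∧
  (∀ i j m, i ≠ j → j ≠ m → i ≠ m →
    ¬ ∃ P : ℝ × ℝ, OnLine (f i) P ∧ OnLine (f j) P ∧ OnLine (f m) P)

/-- `X` is a Chung-Yao lattice of degree `m`. -/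
def IsChungYao (m : ℕ) (X : Finset (ℝ × ℝ)) : Prop :=
  ∃ f : Fin (m + 2) → MvPolynomial (Fin 2) ℝ, InGenPos (m + 2) f ∧
    ∀ P : ℝ × ℝ, P ∈ X ↔ ∃ i j, i ≠ j ∧ OnLine (f i) P ∧ OnLine (f j) P
lemma evalPt_mul (p q : MvPolynomial (Fin 2) ℝ) (A : ℝ × ℝ) :
    evalPt (p * q) A = evalPt p A * evalPt q A := by simp [evalPt]

lemma evalPt_prod {ι : Type*} (s : Finset ι) (f : ι → MvPolynomial (Fin 2) ℝ) (A : ℝ × ℝ) :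
    evalPt (∏ i ∈ s, f i) A = ∏ i ∈ s, evalPt (f i) A := by
  simp [evalPt]

lemma evalPt_smul (c : ℝ) (p : MvPolynomial (Fin 2) ℝ) (A : ℝ × ℝ) :
    evalPt (c • p) A = c * evalPt p A := by
  simp [evalPt, MvPolynomial.smul_eval]

lemma evalPt_sum {ι : Type*} (s : Finset ι) (f : ι → MvPolynomial (Fin 2) ℝ) (A : ℝ × ℝ) :
    evalPt (∑ i ∈ s, f i) A = ∑ i ∈ s, evalPt (f i) A := by
  simp [evalPt]

lemma evalPt_sub (p q : MvPolynomial (Fin 2) ℝ) (A : ℝ × ℝ) :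
    evalPt (p - q) A = evalPt p A - evalPt q A := by simp [evalPt]

-- filter card
lemma filter_lt_card (N a : ℕ) (ha : a ≤ N + 1) :
    (Finset.univ.filter (fun i : Fin (N + 1) => (i : ℕ) < a)).card = a := by
  have : ((Finset.univ.filter (fun i : Fin (N + 1) => (i : ℕ) < a))).card = (Finset.range a).card := by
    refine Finset.card_bij (fun i _ => (i : ℕ)) ?_ ?_ ?_
    · intro i hi; simp at hi ⊢; exact hi
    · intro i hi j hj h; exact Fin.ext h
    · intro m hm
      simp only [Finset.mem_range] at hm
      exact ⟨⟨m, lt_of_lt_of_le hm ha⟩, by simp [hm], rfl⟩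
  simpa using this

lemma filter_lt_prod {M : Type*} [CommMonoid M] (N a : ℕ) (ha : a ≤ N + 1)
    (F : Fin (N + 1) → M) :
    ∏ i ∈ Finset.univ.filter (fun i : Fin (N + 1) => (i : ℕ) < a), F i
      = ∏ m ∈ Finset.range a, F ⟨m % (N + 1), Nat.mod_lt _ (Nat.succ_pos N)⟩ := by
  refine Finset.prod_bij (fun (i : Fin (N+1)) _ => (i : ℕ)) ?_ ?_ ?_ ?_
  · intro i hi; simp at hi ⊢; exact hi
  · intro i hi j hj h; exact Fin.ext h
  · intro m hm
    simp only [Finset.mem_range] at hm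
    exact ⟨⟨m, lt_of_lt_of_le hm ha⟩, by simp [hm], rfl⟩
  · intro i hi
    congr 1
    exact Fin.ext (by simp [Nat.mod_eq_of_lt i.isLt])

/-- The triangle index set. -/
noncomputable def Tri (n : ℕ) : Finset (Fin (n+1) × Fin (n+1)) :=
  Finset.univ.filter (fun q => (q.1 : ℕ) + (q.2 : ℕ) ≤ n)

lemma Tri_card (n : ℕ) : (Tri n).card = (n + 2) * (n + 1) / 2 := by
  have h1 : (Tri n).card = ((Finset.range (n+1)).sigma (fun m => Finset.HasAntidiagonal.antidiagonal m)).card := by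
    refine Finset.card_bij (fun q _ => ⟨(q.1 : ℕ) + (q.2 : ℕ), ((q.1 : ℕ), (q.2 : ℕ))⟩) ?_ ?_ ?_
    · intro q hq
      simp only [Tri, Finset.mem_filter] at hq
      simp [Finset.mem_sigma, Finset.mem_range, Nat.lt_succ_iff, hq.2]
    · intro a ha b hb h
      simp only [Sigma.mk.inj_iff, Prod.mk.injEq, heq_eq_eq] at h
      exact Prod.ext (Fin.ext h.2.1) (Fin.ext h.2.2)
    · rintro ⟨m, i, j⟩ hm
      simp only [Finset.mem_sigma, Finset.mem_range, Finset.HasAntidiagonal.mem_antidiagonal, Nat.lt_succ_iff] at hm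
      obtain ⟨hm1, hm2⟩ := hm
      refine ⟨(⟨i, ?_⟩, ⟨j, ?_⟩), ?_, ?_⟩
      · omega
      · omega
      · simp [Tri]; omega
      · simp [hm2]
  rw [h1, Finset.card_sigma]
  simp only [Finset.Nat.card_antidiagonal]
  have h2 : ∑ m ∈ Finset.range (n+1), (m+1) = ∑ m ∈ Finset.range (n+2), m := by
    rw [Finset.sum_range_succ' (fun m => m) (n+1)]
    simp
  rw [h2]
  have h3 := Finset.sum_range_id_mul_two (n+2)
  have h4 : n + 2 - 1 = n + 1 := rfl
  rw [h4] at h3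
  omega

lemma finsupp_sum_fin2 (s : Fin 2 →₀ ℕ) : (s.sum fun _ e => e) = s 0 + s 1 := by
  rw [Finsupp.sum_fintype _ _ (fun _ => rfl)]
  exact Fin.sum_univ_two _

noncomputable def triEquiv (n : ℕ) :
    {s : Fin 2 →₀ ℕ // (s.sum fun _ e => e) ≤ n} ≃ {q // q ∈ Tri n} where
  toFun s := ⟨(⟨s.1 0, by have := s.2; rw [finsupp_sum_fin2] at this; omega⟩,
               ⟨s.1 1, by have := s.2; rw [finsupp_sum_fin2] at this; omega⟩),
    by have := s.2; rw [finsupp_sum_fin2] at this; simp [Tri]; omega⟩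
  invFun q := ⟨Finsupp.equivFunOnFinite.symm ![(q.1.1 : ℕ), (q.1.2 : ℕ)],
    by
      have hq := q.2
      simp only [Tri, Finset.mem_filter] at hq
      rw [finsupp_sum_fin2]
      simpa using hq.2⟩
  left_inv s := by
    ext i
    fin_cases i <;> simp
  right_inv q := by
    ext <;> simp

lemma finrank_restrictTotalDegree (n : ℕ) :
    Module.finrank ℝ (MvPolynomial.restrictTotalDegree (Fin 2) ℝ n) = (n + 2) * (n + 1) / 2 := by
  classical
  haveI : Fintype ↑{ m : Fin 2 →₀ ℕ | (m.sum fun _ e => e) ≤ n } :=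
    Fintype.ofEquiv _ (triEquiv n).symm
  have b := MvPolynomial.basisRestrictSupport ℝ { m : Fin 2 →₀ ℕ | (m.sum fun _ e => e) ≤ n }
  rw [show MvPolynomial.restrictTotalDegree (Fin 2) ℝ n
      = MvPolynomial.restrictSupport ℝ { m : Fin 2 →₀ ℕ | (m.sum fun _ e => e) ≤ n } from rfl]
  rw [Module.finrank_eq_card_basis b]
  rw [@Fintype.card_congr _ _ this (FinsetCoe.fintype _) (triEquiv n)]
  exact (Fintype.card_coe (Tri n)).trans (Tri_card n)

noncomputable def evMap (n : ℕ) (X : Finset (ℝ × ℝ)) :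
    MvPolynomial.restrictTotalDegree (Fin 2) ℝ n →ₗ[ℝ] ({A // A ∈ X} → ℝ) where
  toFun p A := evalPt p.1 A.1
  map_add' p q := by funext A; simp [evalPt]
  map_smul' c p := by funext A; simp [evalPt, MvPolynomial.smul_eval]

lemma vanish_eq_zero (n : ℕ) (X : Finset (ℝ × ℝ)) (hcard : X.card = (n + 2) * (n + 1) / 2)
    (q : {A // A ∈ X} → MvPolynomial (Fin 2) ℝ)
    (hq : ∀ A : {A // A ∈ X}, (q A).totalDegree ≤ n ∧ evalPt (q A) A.1 = 1 ∧
      ∀ B ∈ X, B ≠ A.1 → evalPt (q A) B = 0)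
    (p : MvPolynomial (Fin 2) ℝ) (hdeg : p.totalDegree ≤ n)
    (hv : ∀ A ∈ X, evalPt p A = 0) : p = 0 := by
  classical
  have hsurj : Function.Surjective (evMap n X) := by
    intro g
    have hmem : (∑ A : {A // A ∈ X}, g A • q A) ∈ MvPolynomial.restrictTotalDegree (Fin 2) ℝ n := by
      rw [MvPolynomial.mem_restrictTotalDegree]
      refine le_trans (MvPolynomial.totalDegree_finset_sum _ _) ?_
      refine Finset.sup_le fun A _ => ?_
      exact le_trans (MvPolynomial.totalDegree_smul_le _ _) (hq A).1
    refine ⟨⟨_, hmem⟩, ?_⟩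
    funext B
    show evalPt (∑ A : {A // A ∈ X}, g A • q A) B.1 = g B
    rw [evalPt_sum]
    rw [Finset.sum_eq_single B]
    · rw [evalPt_smul, (hq B).2.1, mul_one]
    · intro A _ hAB
      rw [evalPt_smul, (hq A).2.2 B.1 B.2 (fun h => hAB (Subtype.ext h.symm ▸ rfl)), mul_zero]
    · intro h; exact absurd (Finset.mem_univ B) h
  have hinj : Function.Injective (evMap n X) := by
    have hrank : Module.finrank ℝ (MvPolynomial.restrictTotalDegree (Fin 2) ℝ n)
        = Module.finrank ℝ ({A // A ∈ X} → ℝ) := by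
      rw [finrank_restrictTotalDegree, Module.finrank_fintype_fun_eq_card, Fintype.card_coe, hcard]
    have h1 := LinearMap.finrank_range_add_finrank_ker (evMap n X)
    rw [LinearMap.range_eq_top.mpr hsurj, finrank_top, ← hrank] at h1
    have h2 : Module.finrank ℝ (LinearMap.ker (evMap n X)) = 0 := by omega
    rw [← LinearMap.ker_eq_bot]
    haveI : NoZeroSMulDivisors ℝ ↥(MvPolynomial.restrictTotalDegree (Fin 2) ℝ n) := by
      set_option synthInstance.maxHeartbeats 1000000 in infer_instance
    exact Submodule.finrank_eq_zero.mp h2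
  have hp : p ∈ MvPolynomial.restrictTotalDegree (Fin 2) ℝ n :=
    (MvPolynomial.mem_restrictTotalDegree _ _ _).mpr hdeg
  have : evMap n X ⟨p, hp⟩ = evMap n X 0 := by
    funext A
    show evalPt p A.1 = evalPt (0 : MvPolynomial.restrictTotalDegree (Fin 2) ℝ n).1 A.1
    rw [hv A.1 A.2]
    simp [evalPt]
  have := hinj this
  exact congrArg Subtype.val this
lemma smul_linear (c : ℝ) (hc : c ≠ 0) (l : MvPolynomial (Fin 2) ℝ)
    (hl : l.totalDegree = 1) : (c • l).totalDegree = 1 := by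
  refine le_antisymm (le_trans (MvPolynomial.totalDegree_smul_le _ _) hl.le) ?_
  have : l = c⁻¹ • (c • l) := by rw [smul_smul, inv_mul_cancel₀ hc, one_smul]
  calc 1 = l.totalDegree := hl.symm
    _ = (c⁻¹ • (c • l)).totalDegree := by rw [← this]
    _ ≤ (c • l).totalDegree := MvPolynomial.totalDegree_smul_le _ _

noncomputable def Qprod (n : ℕ) (ell : Fin 3 → Fin (n + 1) → MvPolynomial (Fin 2) ℝ)
    (i₀ j₀ k₀ : Fin (n + 1)) : MvPolynomial (Fin 2) ℝ :=
  (∏ i ∈ Finset.univ.filter (fun i : Fin (n + 1) => (i : ℕ) < (i₀ : ℕ)), ell 0 i) *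
  (∏ j ∈ Finset.univ.filter (fun j : Fin (n + 1) => (j : ℕ) < (j₀ : ℕ)), ell 1 j) *
  (∏ k ∈ Finset.univ.filter (fun k : Fin (n + 1) => (k : ℕ) < (k₀ : ℕ)), ell 2 k)

/-- A generalized principal lattice of degree `n` is a `GC_n` set, with
fundamental polynomial of the node `x_{i₀j₀k₀}` the suitably normalized product of the
lines `ℓ_i^0 (i < i₀)`, `ℓ_j^1 (j < j₀)`, `ℓ_k^2 (k < k₀)`. -/
theorem GPL_is_GC
    (n : ℕ) (X : Finset (ℝ × ℝ))
    (ell : Fin 3 → Fin (n + 1) → MvPolynomial (Fin 2) ℝ)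
    (hlin : ∀ r i, IsLinearPoly (ell r i))
    (hdist : ∀ r i r' i', (r, i) ≠ (r', i') → ¬ SameLine (ell r i) (ell r' i'))
    (hiff : ∀ i j k : Fin (n + 1),
      (∃ P ∈ X, OnLine (ell 0 i) P ∧ OnLine (ell 1 j) P ∧ OnLine (ell 2 k) P) ↔
        (i : ℕ) + j + k = n)
    (x : Fin (n + 1) → Fin (n + 1) → Fin (n + 1) → ℝ × ℝ)
    (hx : ∀ i j k : Fin (n + 1), (i : ℕ) + j + k = n →
      x i j k ∈ X ∧ OnLine (ell 0 i) (x i j k) ∧ OnLine (ell 1 j) (x i j k) ∧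
        OnLine (ell 2 k) (x i j k))
    (hXeq : ∀ P ∈ X, ∃ i j k : Fin (n + 1), (i : ℕ) + j + k = n ∧ P = x i j k) :
    GCSet n X ∧
    ∀ i₀ j₀ k₀ : Fin (n + 1), (i₀ : ℕ) + j₀ + k₀ = n →
      ∃ c : ℝ, IsFundamental n X (x i₀ j₀ k₀)
        (c • ((∏ i ∈ Finset.univ.filter (fun i : Fin (n + 1) => (i : ℕ) < i₀), ell 0 i) *
              (∏ j ∈ Finset.univ.filter (fun j : Fin (n + 1) => (j : ℕ) < j₀), ell 1 j) *
              (∏ k ∈ Finset.univ.filter (fun k : Fin (n + 1) => (k : ℕ) < k₀), ell 2 k))) := by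
  classical
  have key : ∀ P ∈ X, ∀ i j k : Fin (n + 1), OnLine (ell 0 i) P → OnLine (ell 1 j) P →
      OnLine (ell 2 k) P → (i : ℕ) + j + k = n :=
    fun P hP i j k h0 h1 h2 => (hiff i j k).mp ⟨P, hP, h0, h1, h2⟩
  have hQdeg : ∀ i₀ j₀ k₀ : Fin (n + 1), (i₀ : ℕ) + j₀ + k₀ = n →
      (Qprod n ell i₀ j₀ k₀).totalDegree ≤ n := by
    intro i₀ j₀ k₀ h
    have bound : ∀ (r : Fin 3) (a : Fin (n + 1)),
        (∏ i ∈ Finset.univ.filter (fun i : Fin (n + 1) => (i : ℕ) < (a : ℕ)),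
          ell r i).totalDegree ≤ (a : ℕ) := by
      intro r a
      refine le_trans (MvPolynomial.totalDegree_finset_prod _ _) ?_
      have h1 : ∀ i ∈ Finset.univ.filter (fun i : Fin (n + 1) => (i : ℕ) < (a : ℕ)),
          (ell r i).totalDegree = 1 := fun i _ => hlin r i
      rw [Finset.sum_congr rfl h1, Finset.sum_const, smul_eq_mul, mul_one,
        filter_lt_card n (a : ℕ) (le_of_lt a.isLt)]
    refine le_trans (MvPolynomial.totalDegree_mul _ _) ?_
    refine le_trans (add_le_add (le_trans (MvPolynomial.totalDegree_mul _ _)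
      (add_le_add (bound 0 i₀) (bound 1 j₀))) (bound 2 k₀)) ?_
    omega
  have hQA : ∀ i₀ j₀ k₀ : Fin (n + 1), (i₀ : ℕ) + j₀ + k₀ = n →
      evalPt (Qprod n ell i₀ j₀ k₀) (x i₀ j₀ k₀) ≠ 0 := by
    intro i₀ j₀ k₀ h
    obtain ⟨hmem, h0, h1, h2⟩ := hx i₀ j₀ k₀ h
    unfold Qprod
    rw [evalPt_mul, evalPt_mul, evalPt_prod, evalPt_prod, evalPt_prod]
    refine mul_ne_zero (mul_ne_zero ?_ ?_) ?_
    · refine Finset.prod_ne_zero_iff.mpr fun i hi hz => ?_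
      simp only [Finset.mem_filter] at hi
      have := key _ hmem i j₀ k₀ hz h1 h2
      omega
    · refine Finset.prod_ne_zero_iff.mpr fun j hj hz => ?_
      simp only [Finset.mem_filter] at hj
      have := key _ hmem i₀ j k₀ h0 hz h2
      omega
    · refine Finset.prod_ne_zero_iff.mpr fun k hk hz => ?_
      simp only [Finset.mem_filter] at hk
      have := key _ hmem i₀ j₀ k h0 h1 hz
      omega
  have hQvanish : ∀ i₀ j₀ k₀ : Fin (n + 1), (i₀ : ℕ) + j₀ + k₀ = n →
      ∀ B ∈ X, B ≠ x i₀ j₀ k₀ → evalPt (Qprod n ell i₀ j₀ k₀) B = 0 := by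
    intro i₀ j₀ k₀ h B hB hBA
    obtain ⟨i, j, k, hsum, rfl⟩ := hXeq B hB
    obtain ⟨-, g0, g1, g2⟩ := hx i j k hsum
    have hlt : (i : ℕ) < i₀ ∨ (j : ℕ) < j₀ ∨ (k : ℕ) < k₀ := by
      by_contra hc
      push_neg at hc
      refine hBA ?_
      have e1 : i = i₀ := Fin.ext (by omega)
      have e2 : j = j₀ := Fin.ext (by omega)
      have e3 : k = k₀ := Fin.ext (by omega)
      rw [e1, e2, e3]
    unfold Qprod
    rw [evalPt_mul, evalPt_mul, evalPt_prod, evalPt_prod, evalPt_prod]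
    rcases hlt with hlt | hlt | hlt
    · refine mul_eq_zero_of_left (mul_eq_zero_of_left ?_ _) _
      exact Finset.prod_eq_zero (Finset.mem_filter.mpr ⟨Finset.mem_univ i, hlt⟩)
        (show evalPt (ell 0 i) (x i j k) = 0 from g0)
    · refine mul_eq_zero_of_left (mul_eq_zero_of_right _ ?_) _
      exact Finset.prod_eq_zero (Finset.mem_filter.mpr ⟨Finset.mem_univ j, hlt⟩)
        (show evalPt (ell 1 j) (x i j k) = 0 from g1)
    · refine mul_eq_zero_of_right _ ?_
      exact Finset.prod_eq_zero (Finset.mem_filter.mpr ⟨Finset.mem_univ k, hlt⟩)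
        (show evalPt (ell 2 k) (x i j k) = 0 from g2)
  have fund : ∀ i₀ j₀ k₀ : Fin (n + 1), (i₀ : ℕ) + j₀ + k₀ = n →
      ∃ c : ℝ, c ≠ 0 ∧ IsFundamental n X (x i₀ j₀ k₀) (c • Qprod n ell i₀ j₀ k₀) := by
    intro i₀ j₀ k₀ h
    refine ⟨(evalPt (Qprod n ell i₀ j₀ k₀) (x i₀ j₀ k₀))⁻¹, inv_ne_zero (hQA _ _ _ h),
      ?_, ?_, ?_⟩
    · exact le_trans (MvPolynomial.totalDegree_smul_le _ _) (hQdeg _ _ _ h)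
    · rw [evalPt_smul, inv_mul_cancel₀ (hQA _ _ _ h)]
    · intro B hB hBA
      rw [evalPt_smul, hQvanish _ _ _ h B hB hBA, mul_zero]
  have hcard : X.card = (n + 2) * (n + 1) / 2 := by
    have himg : X = (Tri n).image
        (fun q : Fin (n + 1) × Fin (n + 1) =>
          x q.1 q.2 ⟨n - (q.1 : ℕ) - (q.2 : ℕ), by omega⟩) := by
      ext P
      simp only [Finset.mem_image]
      constructor
      · intro hP
        obtain ⟨i, j, k, hsum, rfl⟩ := hXeq P hP
        refine ⟨(i, j), ?_, ?_⟩
        · simp only [Tri, Finset.mem_filter, Finset.mem_univ, true_and]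
          omega
        · exact congrArg (x i j) (Fin.ext (by simp only [Fin.val_mk]; omega)).symm
      · rintro ⟨q, hq, rfl⟩
        simp only [Tri, Finset.mem_filter, Finset.mem_univ, true_and] at hq
        exact (hx _ _ _ (by simp only [Fin.val_mk]; omega)).1
    rw [himg, Finset.card_image_of_injOn, Tri_card]
    intro q hq q' hq' hEq
    simp only [Finset.coe_filter, Tri, Set.mem_setOf_eq, Finset.mem_filter] at hq hq'
    have hsum : (q.1 : ℕ) + q.2 + ((⟨n - (q.1 : ℕ) - (q.2 : ℕ), by omega⟩ : Fin (n+1)) : ℕ)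
        = n := by simp only [Fin.val_mk]; omega
    have hsum' : (q'.1 : ℕ) + q'.2 + ((⟨n - (q'.1 : ℕ) - (q'.2 : ℕ), by omega⟩ : Fin (n+1)) : ℕ)
        = n := by simp only [Fin.val_mk]; omega
    obtain ⟨hP, a0, a1, a2⟩ := hx q.1 q.2 _ hsum
    obtain ⟨hP', b0, b1, b2⟩ := hx q'.1 q'.2 _ hsum'
    have hEq2 : x q.1 q.2 ⟨n - (q.1 : ℕ) - (q.2 : ℕ), by omega⟩
        = x q'.1 q'.2 ⟨n - (q'.1 : ℕ) - (q'.2 : ℕ), by omega⟩ := hEq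
    rw [← hEq2] at b0 b1
    have e1 := key _ hP q'.1 q.2 _ b0 a1 a2
    have e2 := key _ hP q.1 q'.2 _ a0 b1 a2
    simp only [Fin.val_mk] at e1 e2
    exact Prod.ext (Fin.ext (by omega)) (Fin.ext (by omega))
  have hfundA : ∀ A : {A // A ∈ X}, ∃ p : MvPolynomial (Fin 2) ℝ,
      p.totalDegree ≤ n ∧ evalPt p A.1 = 1 ∧ ∀ B ∈ X, B ≠ A.1 → evalPt p B = 0 := by
    intro A
    obtain ⟨i, j, k, hsum, hAeq⟩ := hXeq A.1 A.2
    obtain ⟨c, -, hF⟩ := fund i j k hsum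
    rw [hAeq]
    exact ⟨c • Qprod n ell i j k, hF⟩
  choose qf hqf using hfundA
  have hex : ∀ c : (ℝ × ℝ) → ℝ, ∃ p : MvPolynomial (Fin 2) ℝ,
      p.totalDegree ≤ n ∧ ∀ A ∈ X, evalPt p A = c A := by
    intro c
    refine ⟨∑ A : {A // A ∈ X}, c A.1 • qf A, ?_, ?_⟩
    · refine le_trans (MvPolynomial.totalDegree_finset_sum _ _)
        (Finset.sup_le fun A _ => ?_)
      exact le_trans (MvPolynomial.totalDegree_smul_le _ _) (hqf A).1
    · intro B hB
      rw [evalPt_sum, Finset.sum_eq_single (⟨B, hB⟩ : {A // A ∈ X})]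
      · rw [evalPt_smul, (hqf ⟨B, hB⟩).2.1, mul_one]
      · intro A _ hne
        rw [evalPt_smul, (hqf A).2.2 B hB (fun h => hne (Subtype.ext h.symm)), mul_zero]
      · exact fun h => absurd (Finset.mem_univ _) h
  have hNC : NCorrect n X := by
    refine ⟨hcard, fun c => ?_⟩
    obtain ⟨p, hp1, hp2⟩ := hex c
    refine ⟨p, ⟨hp1, hp2⟩, ?_⟩
    rintro p' ⟨hp'1, hp'2⟩
    have hz : p' - p = 0 := vanish_eq_zero n X hcard qf hqf (p' - p)
      (le_trans (MvPolynomial.totalDegree_sub _ _) (max_le hp'1 hp1))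
      (fun A hA => by rw [evalPt_sub, hp2 A hA, hp'2 A hA, sub_self])
    exact sub_eq_zero.mp hz
  refine ⟨⟨hNC, ?_⟩, ?_⟩
  · intro A hA
    obtain ⟨i₀, j₀, k₀, hsum, rfl⟩ := hXeq A hA
    obtain ⟨c, hc, hF⟩ := fund i₀ j₀ k₀ hsum
    by_cases hn : n = 0
    · subst hn
      refine ⟨fun m => m.elim0, fun m => m.elim0, ?_⟩
      rw [Finset.univ_eq_empty, Finset.prod_empty]
      refine ⟨by simp [MvPolynomial.totalDegree_one], by simp [evalPt], ?_⟩
      intro B hB hBA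
      exfalso
      apply hBA
      obtain ⟨i, j, k, hs, rfl⟩ := hXeq B hB
      have h1 : ∀ m : Fin 1, m = 0 := fun m => Subsingleton.elim m 0
      rw [h1 i, h1 j, h1 k, h1 i₀, h1 j₀, h1 k₀]
    · set g : ℕ → MvPolynomial (Fin 2) ℝ := fun m =>
        if m < (i₀ : ℕ) then ell 0 ⟨m % (n + 1), Nat.mod_lt _ (Nat.succ_pos n)⟩
        else if m < (i₀ : ℕ) + (j₀ : ℕ) then
          ell 1 ⟨(m - (i₀ : ℕ)) % (n + 1), Nat.mod_lt _ (Nat.succ_pos n)⟩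
        else ell 2 ⟨(m - (i₀ : ℕ) - (j₀ : ℕ)) % (n + 1), Nat.mod_lt _ (Nat.succ_pos n)⟩
        with hg
      have hglin : ∀ m, IsLinearPoly (g m) := by
        intro m
        by_cases h1 : m < (i₀ : ℕ)
        · rw [hg]; simp only [if_pos h1]; exact hlin 0 _
        · by_cases h2 : m < (i₀ : ℕ) + (j₀ : ℕ)
          · rw [hg]; simp only [if_neg h1, if_pos h2]; exact hlin 1 _
          · rw [hg]; simp only [if_neg h1, if_neg h2]; exact hlin 2 _
      have hgprod : ∏ m ∈ Finset.range n, g m = Qprod n ell i₀ j₀ k₀ := by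
        conv_lhs => rw [show n = (i₀ : ℕ) + (j₀ : ℕ) + (k₀ : ℕ) from hsum.symm]
        rw [Finset.prod_range_add, Finset.prod_range_add]
        unfold Qprod
        congr 1
        · congr 1
          · rw [filter_lt_prod n (i₀ : ℕ) (le_of_lt i₀.isLt) (ell 0)]
            refine Finset.prod_congr rfl fun m hm => ?_
            simp only [Finset.mem_range] at hm
            rw [hg]; simp only [if_pos hm]
          · rw [filter_lt_prod n (j₀ : ℕ) (le_of_lt j₀.isLt) (ell 1)]
            refine Finset.prod_congr rfl fun m hm => ?_
            simp only [Finset.mem_range] at hm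
            have h1 : ¬((i₀ : ℕ) + m < (i₀ : ℕ)) := by omega
            have h2 : (i₀ : ℕ) + m < (i₀ : ℕ) + (j₀ : ℕ) := by omega
            rw [hg]; simp only [if_neg h1, if_pos h2]
            have h3 : (i₀ : ℕ) + m - (i₀ : ℕ) = m := by omega
            rw [h3]
        · rw [filter_lt_prod n (k₀ : ℕ) (le_of_lt k₀.isLt) (ell 2)]
          refine Finset.prod_congr rfl fun m hm => ?_
          simp only [Finset.mem_range] at hm
          have h1 : ¬((i₀ : ℕ) + (j₀ : ℕ) + m < (i₀ : ℕ)) := by omega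
          have h2 : ¬((i₀ : ℕ) + (j₀ : ℕ) + m < (i₀ : ℕ) + (j₀ : ℕ)) := by omega
          rw [hg]; simp only [if_neg h1, if_neg h2]
          have h3 : (i₀ : ℕ) + (j₀ : ℕ) + m - (i₀ : ℕ) - (j₀ : ℕ) = m := by omega
          rw [h3]
      refine ⟨Function.update (fun m : Fin n => g (m : ℕ))
        ⟨0, Nat.pos_of_ne_zero hn⟩ (c • g 0), ?_, ?_⟩
      · intro m
        by_cases hm : m = ⟨0, Nat.pos_of_ne_zero hn⟩
        · rw [hm, Function.update_self]
          exact smul_linear c hc _ (hglin 0)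
        · rw [Function.update_of_ne hm]
          exact hglin _
      · have hfp : (∏ m : Fin n, Function.update (fun m : Fin n => g (m : ℕ))
            ⟨0, Nat.pos_of_ne_zero hn⟩ (c • g 0) m) = c • Qprod n ell i₀ j₀ k₀ := by
          rw [← hgprod]
          rw [Finset.prod_update_of_mem (Finset.mem_univ _)]
          rw [smul_mul_assoc]
          congr 1
          rw [← Finset.prod_eq_mul_prod_sdiff_singleton_of_mem (Finset.mem_univ
            (⟨0, Nat.pos_of_ne_zero hn⟩ : Fin n)) (fun m : Fin n => g (m : ℕ))]
          exact Fin.prod_univ_eq_prod_range g n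
        rw [hfp]
        exact hF
  · intro i₀ j₀ k₀ hsum
    obtain ⟨c, -, hF⟩ := fund i₀ j₀ k₀ hsum
    exact ⟨c, hF⟩
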